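/- Let A be an invertible three-level sparse matrix built from blocks A₁₁, A₁₂,ᵢ, A₁₂,ᵢⱼ, A₂₂,ᵢ, A₁₂,(i),(j), A₂₂,ᵢⱼ, suppose each A₂₂,ᵢⱼ is invertible and each H₂₂,ᵢ is invertible, and let x, a be conformably partitioned vectors with A x = a, where x₁, a₁ are the p-blocks, x₂,ᵢ, a₂,ᵢ the q₁-blocks and x₂,ᵢⱼ, a₂,ᵢⱼ the q₂-blocks. Define h₂,ᵢ := a₂,ᵢ − Σ_{j=1}^{nᵢ} A₁₂,(i),(j) A₂₂,ᵢⱼ⁻¹ a₂,ᵢⱼ. Then x₁ = A¹¹ ( a₁ − Σ_{i=1}^m H₁₂,ᵢ H₂₂,ᵢ⁻¹ h₂,ᵢ − Σ_{i=1}^m Σ_{j=1}^{nᵢ} A₁₂,ᵢⱼ A₂₂,ᵢⱼ⁻¹ a₂,ᵢⱼ ), x₂,ᵢ = H₂₂,ᵢ⁻¹ ( h₂,ᵢ − H₁₂,ᵢᵀ x₁ ) for all i, and x₂,ᵢⱼ = A₂₂,ᵢⱼ⁻¹ ( a₂,ᵢⱼ − A₁₂,ᵢⱼᵀ x₁ −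 A₁₂,(i),(j)ᵀ x₂,ᵢ ) for all i, j. -/

import Mathlib

open Matrix

/-- The three-level sparse matrix built from blocks `A11`, `A12 i` (level 1–2),
`A12' i j` (level 1–3), `A22 i` (level-2 diagonal), `A12'' i j` (level 2–3) and
`A22' i j` (level-3 diagonal). -/
def threeLevelSparse {p q₁ q₂ m : ℕ} {n : Fin m → ℕ}
    (A11 : Matrix (Fin p) (Fin p) ℝ)
    (A12 : (i : Fin m) → Matrix (Fin p) (Fin q₁) ℝ)
    (A12' : (i : Fin m) → Fin (n i) → Matrix (Fin p) (Fin q₂) ℝ)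
    (A22 : (i : Fin m) → Matrix (Fin q₁) (Fin q₁) ℝ)
    (A12'' : (i : Fin m) → Fin (n i) → Matrix (Fin q₁) (Fin q₂) ℝ)
    (A22' : (i : Fin m) → Fin (n i) → Matrix (Fin q₂) (Fin q₂) ℝ) :
    Matrix (Fin p ⊕ (Σ i : Fin m, Fin q₁ ⊕ (Fin (n i) × Fin q₂)))
           (Fin p ⊕ (Σ i : Fin m, Fin q₁ ⊕ (Fin (n i) × Fin q₂))) ℝ :=
  Matrix.of fun x y =>
    match x, y with
    | Sum.inl a, Sum.inl b => A11 a b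
    | Sum.inl a, Sum.inr ⟨i, Sum.inl b⟩ => A12 i a b
    | Sum.inl a, Sum.inr ⟨i, Sum.inr (j, b)⟩ => A12' i j a b
    | Sum.inr ⟨i, Sum.inl a⟩, Sum.inl b => A12 i b a
    | Sum.inr ⟨i, Sum.inr (j, a)⟩, Sum.inl b => A12' i j b a
    | Sum.inr ⟨i, Sum.inl a⟩, Sum.inr ⟨i', Sum.inl b⟩ =>
        if i = i' then A22 i a b else 0
    | Sum.inr ⟨i, Sum.inl a⟩, Sum.inr ⟨i', Sum.inr (j, b)⟩ =>
        if i = i' then A12'' i' j a b else 0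
    | Sum.inr ⟨i, Sum.inr (j, a)⟩, Sum.inr ⟨i', Sum.inl b⟩ =>
        if i = i' then A12'' i j b a else 0
    | Sum.inr ⟨i, Sum.inr (j, a)⟩, Sum.inr ⟨i', Sum.inr (j', b)⟩ =>
        if (⟨i, j⟩ : Σ i, Fin (n i)) = ⟨i', j'⟩ then A22' i' j' a b else 0

/-- `H₁₂,ᵢ := A₁₂,ᵢ − Σⱼ A₁₂,ᵢⱼ A₂₂,ᵢⱼ⁻¹ A₁₂,(i),(j)ᵀ`. -/
noncomputable def H12 {p q₁ q₂ m : ℕ} {n : Fin m → ℕ}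
    (A12 : (i : Fin m) → Matrix (Fin p) (Fin q₁) ℝ)
    (A12' : (i : Fin m) → Fin (n i) → Matrix (Fin p) (Fin q₂) ℝ)
    (A12'' : (i : Fin m) → Fin (n i) → Matrix (Fin q₁) (Fin q₂) ℝ)
    (A22' : (i : Fin m) → Fin (n i) → Matrix (Fin q₂) (Fin q₂) ℝ)
    (i : Fin m) : Matrix (Fin p) (Fin q₁) ℝ :=
  A12 i - ∑ j, A12' i j * (A22' i j)⁻¹ * (A12'' i j)ᵀ

/-- `H₂₂,ᵢ := A₂₂,ᵢ − Σⱼ A₁₂,(i),(j) A₂₂,ᵢⱼ⁻¹ A₁₂,(i),(j)ᵀ`. -/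
noncomputable def H22 {q₁ q₂ m : ℕ} {n : Fin m → ℕ}
    (A22 : (i : Fin m) → Matrix (Fin q₁) (Fin q₁) ℝ)
    (A12'' : (i : Fin m) → Fin (n i) → Matrix (Fin q₁) (Fin q₂) ℝ)
    (A22' : (i : Fin m) → Fin (n i) → Matrix (Fin q₂) (Fin q₂) ℝ)
    (i : Fin m) : Matrix (Fin q₁) (Fin q₁) ℝ :=
  A22 i - ∑ j, A12'' i j * (A22' i j)⁻¹ * (A12'' i j)ᵀ

section Aux

open Finset

variable {p q₁ q₂ m : ℕ} {n : Fin m → ℕ}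

/-- Sum over the two/three-level sigma index. -/
private lemma sigma_sum_aux (f : (Σ i : Fin m, Fin q₁ ⊕ (Fin (n i) × Fin q₂)) → ℝ) :
    ∑ s, f s = ∑ i, (∑ b, f ⟨i, Sum.inl b⟩ + ∑ j, ∑ b, f ⟨i, Sum.inr (j, b)⟩) := by
  rw [show (univ : Finset (Σ i : Fin m, Fin q₁ ⊕ (Fin (n i) × Fin q₂)))
      = univ.sigma (fun _ => univ) from rfl, Finset.sum_sigma]
  refine Finset.sum_congr rfl fun i _ => ?_
  rw [Fintype.sum_sum_type, Fintype.sum_prod_type]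

private lemma sum_mulVec_aux {k l : ℕ} {ι : Type*} (s : Finset ι)
    (M : ι → Matrix (Fin k) (Fin l) ℝ) (v : Fin l → ℝ) :
    (∑ i ∈ s, M i).mulVec v = ∑ i ∈ s, (M i).mulVec v := by
  funext c
  simp only [Matrix.mulVec, dotProduct, Matrix.sum_apply, Finset.sum_apply, Finset.sum_mul]
  exact Finset.sum_comm

variable
    (A11 : Matrix (Fin p) (Fin p) ℝ)
    (A12 : (i : Fin m) → Matrix (Fin p) (Fin q₁) ℝ)
    (A12' : (i : Fin m) → Fin (n i) → Matrix (Fin p) (Fin q₂) ℝ)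
    (A22 : (i : Fin m) → Matrix (Fin q₁) (Fin q₁) ℝ)
    (A12'' : (i : Fin m) → Fin (n i) → Matrix (Fin q₁) (Fin q₂) ℝ)
    (A22' : (i : Fin m) → Fin (n i) → Matrix (Fin q₂) (Fin q₂) ℝ)
    (v : (Fin p ⊕ (Σ i : Fin m, Fin q₁ ⊕ (Fin (n i) × Fin q₂))) → ℝ)

private lemma row1 (c : Fin p) :
    (threeLevelSparse A11 A12 A12' A22 A12'' A22').mulVec v (Sum.inl c) =
      A11.mulVec (v ∘ Sum.inl) c
      + ∑ i, ((A12 i).mulVec (fun b => v (Sum.inr ⟨i, Sum.inl b⟩)) c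
          + ∑ j, (A12' i j).mulVec (fun b => v (Sum.inr ⟨i, Sum.inr (j, b)⟩)) c) := by
  simp only [Matrix.mulVec, dotProduct, Fintype.sum_sum_type, sigma_sum_aux
    (fun s => threeLevelSparse A11 A12 A12' A22 A12'' A22' (Sum.inl c) (Sum.inr s) * v (Sum.inr s))]
  simp [threeLevelSparse, Function.comp]

private lemma row2 (i : Fin m) (c : Fin q₁) :
    (threeLevelSparse A11 A12 A12' A22 A12'' A22').mulVec v (Sum.inr ⟨i, Sum.inl c⟩) =
      (A12 i)ᵀ.mulVec (v ∘ Sum.inl) c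
      + (A22 i).mulVec (fun b => v (Sum.inr ⟨i, Sum.inl b⟩)) c
      + ∑ j, (A12'' i j).mulVec (fun b => v (Sum.inr ⟨i, Sum.inr (j, b)⟩)) c := by
  simp only [Matrix.mulVec, dotProduct, Fintype.sum_sum_type, sigma_sum_aux
    (fun s => threeLevelSparse A11 A12 A12' A22 A12'' A22' (Sum.inr ⟨i, Sum.inl c⟩) (Sum.inr s) * v (Sum.inr s))]
  simp only [threeLevelSparse, Matrix.of_apply, Matrix.transpose_apply, ite_mul, zero_mul,
    Finset.sum_add_distrib]
  rw [Finset.sum_eq_single i (by intro b _ hb; simp [Ne.symm hb]) (by simp),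
      Finset.sum_eq_single i (by intro b _ hb; simp [Ne.symm hb]) (by simp)]
  simp [add_assoc]

private lemma row3 (i : Fin m) (j : Fin (n i)) (c : Fin q₂) :
    (threeLevelSparse A11 A12 A12' A22 A12'' A22').mulVec v (Sum.inr ⟨i, Sum.inr (j, c)⟩) =
      (A12' i j)ᵀ.mulVec (v ∘ Sum.inl) c
      + (A12'' i j)ᵀ.mulVec (fun b => v (Sum.inr ⟨i, Sum.inl b⟩)) c
      + (A22' i j).mulVec (fun b => v (Sum.inr ⟨i, Sum.inr (j, b)⟩)) c := by
  simp only [Matrix.mulVec, dotProduct, Fintype.sum_sum_type, sigma_sum_aux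
    (fun s => threeLevelSparse A11 A12 A12' A22 A12'' A22' (Sum.inr ⟨i, Sum.inr (j, c)⟩) (Sum.inr s) * v (Sum.inr s))]
  simp only [threeLevelSparse, Matrix.of_apply, Matrix.transpose_apply, ite_mul, zero_mul,
    Finset.sum_add_distrib, Sigma.mk.inj_iff, heq_eq_eq]
  rw [Finset.sum_eq_single i (by intro b _ hb; simp [Ne.symm hb]) (by simp),
      Finset.sum_eq_single i (by intro b _ hb; simp [Ne.symm hb, hb.symm]) (by simp)]
  simp only [eq_self_iff_true, true_and, if_true]
  rw [Finset.sum_eq_single j (by intro b _ hb; simp [Ne.symm hb]) (by simp)]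
  simp [add_comm, add_assoc, add_left_comm]

/-- Glue blockwise data into one vector. -/
private def glueVec (u : Fin p → ℝ) (w : (i : Fin m) → Fin q₁ → ℝ)
    (z : (i : Fin m) → (j : Fin (n i)) → Fin q₂ → ℝ) :
    (Fin p ⊕ (Σ i : Fin m, Fin q₁ ⊕ (Fin (n i) × Fin q₂))) → ℝ
  | Sum.inl c => u c
  | Sum.inr ⟨i, Sum.inl b⟩ => w i b
  | Sum.inr ⟨i, Sum.inr (j, b)⟩ => z i j b

@[simp] private lemma glueVec_inl (u w z) (c : Fin p) :
    glueVec (q₁ := q₁) (q₂ := q₂) (n := n) u w z (Sum.inl c) = u c := rfl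
@[simp] private lemma glueVec_inr₁ (u w z) (i : Fin m) (b : Fin q₁) :
    glueVec (p := p) (q₂ := q₂) (n := n) u w z (Sum.inr ⟨i, Sum.inl b⟩) = w i b := rfl
@[simp] private lemma glueVec_inr₂ (u w z) (i : Fin m) (j : Fin (n i)) (b : Fin q₂) :
    glueVec (p := p) (q₁ := q₁) u w z (Sum.inr ⟨i, Sum.inr (j, b)⟩) = z i j b := rfl

private lemma mulVec_glue_zero
    (M : Matrix (Fin p ⊕ (Σ i : Fin m, Fin q₁ ⊕ (Fin (n i) × Fin q₂)))
        (Fin p ⊕ (Σ i : Fin m, Fin q₁ ⊕ (Fin (n i) × Fin q₂))) ℝ)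
    (u : Fin p → ℝ) (c : Fin p) :
    M.mulVec (glueVec u (fun _ _ => 0) (fun _ _ _ => 0)) (Sum.inl c)
      = (M.submatrix Sum.inl Sum.inl).mulVec u c := by
  simp only [Matrix.mulVec, dotProduct, Fintype.sum_sum_type, Matrix.submatrix_apply]
  rw [sigma_sum_aux (fun s => M (Sum.inl c) (Sum.inr s)
    * glueVec u (fun _ _ => 0) (fun _ _ _ => 0) (Sum.inr s))]
  simp

end Aux

theorem threeLevel_linear_system {p q₁ q₂ m : ℕ} {n : Fin m → ℕ}
    (hp : 0 < p) (hq₁ : 0 < q₁) (hq₂ : 0 < q₂) (hm : 0 < m) (hn : ∀ i, 0 < n i)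
    (A11 : Matrix (Fin p) (Fin p) ℝ)
    (A12 : (i : Fin m) → Matrix (Fin p) (Fin q₁) ℝ)
    (A12' : (i : Fin m) → Fin (n i) → Matrix (Fin p) (Fin q₂) ℝ)
    (A22 : (i : Fin m) → Matrix (Fin q₁) (Fin q₁) ℝ)
    (A12'' : (i : Fin m) → Fin (n i) → Matrix (Fin q₁) (Fin q₂) ℝ)
    (A22' : (i : Fin m) → Fin (n i) → Matrix (Fin q₂) (Fin q₂) ℝ)
    (hA11sym : A11.IsSymm) (hA22sym : ∀ i, (A22 i).IsSymm)
    (hA22'sym : ∀ i j, (A22' i j).IsSymm)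
    (hA : IsUnit (threeLevelSparse A11 A12 A12' A22 A12'' A22').det)
    (hA22' : ∀ i j, IsUnit (A22' i j).det)
    (hH22 : ∀ i, IsUnit (H22 A22 A12'' A22' i).det)
    (x a : (Fin p ⊕ (Σ i : Fin m, Fin q₁ ⊕ (Fin (n i) × Fin q₂))) → ℝ)
    (hxa : (threeLevelSparse A11 A12 A12' A22 A12'' A22').mulVec x = a) :
    (x ∘ Sum.inl) =
      ((threeLevelSparse A11 A12 A12' A22 A12'' A22')⁻¹.submatrix
          Sum.inl Sum.inl).mulVec
        ((a ∘ Sum.inl)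
          - ∑ i, (H12 A12 A12' A12'' A22' i * (H22 A22 A12'' A22' i)⁻¹).mulVec
              ((fun b => a (Sum.inr ⟨i, Sum.inl b⟩))
                - ∑ j, (A12'' i j * (A22' i j)⁻¹).mulVec
                    (fun b => a (Sum.inr ⟨i, Sum.inr (j, b)⟩)))
          - ∑ i, ∑ j, (A12' i j * (A22' i j)⁻¹).mulVec
              (fun b => a (Sum.inr ⟨i, Sum.inr (j, b)⟩))) ∧
    (∀ i : Fin m,
      (fun b => x (Sum.inr ⟨i, Sum.inl b⟩)) =
        ((H22 A22 A12'' A22' i)⁻¹).mulVec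
          (((fun b => a (Sum.inr ⟨i, Sum.inl b⟩))
              - ∑ j, (A12'' i j * (A22' i j)⁻¹).mulVec
                  (fun b => a (Sum.inr ⟨i, Sum.inr (j, b)⟩)))
            - (H12 A12 A12' A12'' A22' i)ᵀ.mulVec (x ∘ Sum.inl))) ∧
    ∀ (i : Fin m) (j : Fin (n i)),
      (fun b => x (Sum.inr ⟨i, Sum.inr (j, b)⟩)) =
        ((A22' i j)⁻¹).mulVec
          ((fun b => a (Sum.inr ⟨i, Sum.inr (j, b)⟩))
            - (A12' i j)ᵀ.mulVec (x ∘ Sum.inl)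
            - (A12'' i j)ᵀ.mulVec (fun b => x (Sum.inr ⟨i, Sum.inl b⟩))) := by
  classical
  have hinv : ∀ (i : Fin m) (j : Fin (n i)), ((A22' i j)⁻¹)ᵀ = (A22' i j)⁻¹ := fun i j => by
    rw [Matrix.transpose_nonsing_inv, (hA22'sym i j).eq]
  have hH12T : ∀ i, (H12 A12 A12' A12'' A22' i)ᵀ
      = (A12 i)ᵀ - ∑ j, A12'' i j * (A22' i j)⁻¹ * (A12' i j)ᵀ := fun i => by
    simp [H12, Matrix.transpose_sub, Matrix.transpose_sum, Matrix.transpose_mul, hinv,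
      Matrix.mul_assoc]
  have eq1 : A11.mulVec (x ∘ Sum.inl)
      + ∑ i, ((A12 i).mulVec (fun b => x (Sum.inr ⟨i, Sum.inl b⟩))
          + ∑ j, (A12' i j).mulVec (fun b => x (Sum.inr ⟨i, Sum.inr (j, b)⟩)))
      = a ∘ Sum.inl := by
    funext c
    have h := congrFun hxa (Sum.inl c)
    rw [row1] at h
    simpa [Finset.sum_apply] using h
  have eq2 : ∀ i, (A12 i)ᵀ.mulVec (x ∘ Sum.inl)
      + (A22 i).mulVec (fun b => x (Sum.inr ⟨i, Sum.inl b⟩))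
      + ∑ j, (A12'' i j).mulVec (fun b => x (Sum.inr ⟨i, Sum.inr (j, b)⟩))
      = (fun b => a (Sum.inr ⟨i, Sum.inl b⟩)) := by
    intro i; funext c
    have h := congrFun hxa (Sum.inr ⟨i, Sum.inl c⟩)
    rw [row2] at h
    simpa [Finset.sum_apply] using h
  have eq3 : ∀ i j, (A12' i j)ᵀ.mulVec (x ∘ Sum.inl)
      + (A12'' i j)ᵀ.mulVec (fun b => x (Sum.inr ⟨i, Sum.inl b⟩))
      + (A22' i j).mulVec (fun b => x (Sum.inr ⟨i, Sum.inr (j, b)⟩))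
      = (fun b => a (Sum.inr ⟨i, Sum.inr (j, b)⟩)) := by
    intro i j; funext c
    have h := congrFun hxa (Sum.inr ⟨i, Sum.inr (j, c)⟩)
    rw [row3] at h
    simpa [Finset.sum_apply] using h
  -- claim 3
  have claim3 : ∀ (i : Fin m) (j : Fin (n i)),
      (fun b => x (Sum.inr ⟨i, Sum.inr (j, b)⟩)) =
        ((A22' i j)⁻¹).mulVec
          ((fun b => a (Sum.inr ⟨i, Sum.inr (j, b)⟩))
            - (A12' i j)ᵀ.mulVec (x ∘ Sum.inl)
            - (A12'' i j)ᵀ.mulVec (fun b => x (Sum.inr ⟨i, Sum.inl b⟩))) := by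
    intro i j
    have h2 : (A22' i j).mulVec (fun b => x (Sum.inr ⟨i, Sum.inr (j, b)⟩))
        = (fun b => a (Sum.inr ⟨i, Sum.inr (j, b)⟩))
            - (A12' i j)ᵀ.mulVec (x ∘ Sum.inl)
            - (A12'' i j)ᵀ.mulVec (fun b => x (Sum.inr ⟨i, Sum.inl b⟩)) := by
      rw [← eq3 i j]; abel
    rw [← h2, Matrix.mulVec_mulVec, Matrix.nonsing_inv_mul _ (hA22' i j), Matrix.one_mulVec]
  -- substitution of claim 3 into level-2 rows
  have key2 : ∀ (i : Fin m) (j : Fin (n i)),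
      (A12'' i j).mulVec (fun b => x (Sum.inr ⟨i, Sum.inr (j, b)⟩))
        = (A12'' i j * (A22' i j)⁻¹).mulVec (fun b => a (Sum.inr ⟨i, Sum.inr (j, b)⟩))
          - (A12'' i j * (A22' i j)⁻¹ * (A12' i j)ᵀ).mulVec (x ∘ Sum.inl)
          - (A12'' i j * (A22' i j)⁻¹ * (A12'' i j)ᵀ).mulVec
              (fun b => x (Sum.inr ⟨i, Sum.inl b⟩)) := by
    intro i j
    rw [claim3 i j, Matrix.mulVec_mulVec, Matrix.mulVec_sub, Matrix.mulVec_sub,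
      Matrix.mulVec_mulVec, Matrix.mulVec_mulVec]
  have claim2' : ∀ i, (H22 A22 A12'' A22' i).mulVec (fun b => x (Sum.inr ⟨i, Sum.inl b⟩))
      = (((fun b => a (Sum.inr ⟨i, Sum.inl b⟩))
          - ∑ j, (A12'' i j * (A22' i j)⁻¹).mulVec
              (fun b => a (Sum.inr ⟨i, Sum.inr (j, b)⟩)))
        - (H12 A12 A12' A12'' A22' i)ᵀ.mulVec (x ∘ Sum.inl)) := by
    intro i
    have e2 := eq2 i
    simp_rw [key2 i] at e2
    rw [Finset.sum_sub_distrib, Finset.sum_sub_distrib] at e2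
    rw [H22, hH12T, Matrix.sub_mulVec, Matrix.sub_mulVec, sum_mulVec_aux, sum_mulVec_aux, ← e2]
    abel
  -- claim 2
  have claim2 : ∀ i : Fin m,
      (fun b => x (Sum.inr ⟨i, Sum.inl b⟩)) =
        ((H22 A22 A12'' A22' i)⁻¹).mulVec
          (((fun b => a (Sum.inr ⟨i, Sum.inl b⟩))
              - ∑ j, (A12'' i j * (A22' i j)⁻¹).mulVec
                  (fun b => a (Sum.inr ⟨i, Sum.inr (j, b)⟩)))
            - (H12 A12 A12' A12'' A22' i)ᵀ.mulVec (x ∘ Sum.inl)) := by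
    intro i
    rw [← claim2' i, Matrix.mulVec_mulVec, Matrix.nonsing_inv_mul _ (hH22 i),
      Matrix.one_mulVec]
  -- auxiliary vector components
  obtain ⟨y₂, hy₂⟩ : ∃ w : (i : Fin m) → Fin q₁ → ℝ, w = fun i =>
      -(((H22 A22 A12'' A22' i)⁻¹).mulVec
          ((H12 A12 A12' A12'' A22' i)ᵀ.mulVec (x ∘ Sum.inl))) := ⟨_, rfl⟩
  obtain ⟨y₃, hy₃⟩ : ∃ z : (i : Fin m) → (j : Fin (n i)) → Fin q₂ → ℝ, z = fun i j =>
      -(((A22' i j)⁻¹).mulVec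
          ((A12' i j)ᵀ.mulVec (x ∘ Sum.inl) + (A12'' i j)ᵀ.mulVec (y₂ i))) := ⟨_, rfl⟩
  have hz2 : ∀ i, (H22 A22 A12'' A22' i).mulVec (y₂ i)
      = -((H12 A12 A12' A12'' A22' i)ᵀ.mulVec (x ∘ Sum.inl)) := by
    intro i
    simp only [hy₂]
    rw [Matrix.mulVec_neg, Matrix.mulVec_mulVec, Matrix.mul_nonsing_inv _ (hH22 i),
      Matrix.one_mulVec]
  have hz3 : ∀ i j, (A22' i j).mulVec (y₃ i j)
      = -((A12' i j)ᵀ.mulVec (x ∘ Sum.inl)) - (A12'' i j)ᵀ.mulVec (y₂ i) := by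
    intro i j
    simp only [hy₃]
    rw [Matrix.mulVec_neg, Matrix.mulVec_mulVec, Matrix.mul_nonsing_inv _ (hA22' i j),
      Matrix.one_mulVec]
    abel
  have Z3 : ∀ i j, (A12' i j)ᵀ.mulVec (x ∘ Sum.inl) + (A12'' i j)ᵀ.mulVec (y₂ i)
      + (A22' i j).mulVec (y₃ i j) = 0 := by
    intro i j; rw [hz3 i j]; abel
  have Z2 : ∀ i, (A12 i)ᵀ.mulVec (x ∘ Sum.inl) + (A22 i).mulVec (y₂ i)
      + ∑ j, (A12'' i j).mulVec (y₃ i j) = 0 := by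
    intro i
    have z1 : ∀ j, (A12'' i j).mulVec (y₃ i j)
        = -((A12'' i j * (A22' i j)⁻¹ * (A12' i j)ᵀ).mulVec (x ∘ Sum.inl))
          - (A12'' i j * (A22' i j)⁻¹ * (A12'' i j)ᵀ).mulVec (y₂ i) := by
      intro j
      simp only [hy₃]
      rw [Matrix.mulVec_neg, Matrix.mulVec_mulVec, Matrix.mulVec_add, Matrix.mulVec_mulVec,
        Matrix.mulVec_mulVec]
      abel
    have w := hz2 i
    rw [H22, hH12T, Matrix.sub_mulVec, sum_mulVec_aux, Matrix.sub_mulVec, sum_mulVec_aux] at w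
    simp_rw [z1]
    rw [Finset.sum_sub_distrib]
    simp only [Finset.sum_neg_distrib]
    linear_combination w
  -- the level-1 per-group identity
  have key2' : ∀ (i : Fin m) (j : Fin (n i)),
      (A12' i j).mulVec (fun b => x (Sum.inr ⟨i, Sum.inr (j, b)⟩))
        = (A12' i j * (A22' i j)⁻¹).mulVec (fun b => a (Sum.inr ⟨i, Sum.inr (j, b)⟩))
          - (A12' i j * (A22' i j)⁻¹ * (A12' i j)ᵀ).mulVec (x ∘ Sum.inl)
          - (A12' i j * (A22' i j)⁻¹ * (A12'' i j)ᵀ).mulVec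
              (fun b => x (Sum.inr ⟨i, Sum.inl b⟩)) := by
    intro i j
    rw [claim3 i j, Matrix.mulVec_mulVec, Matrix.mulVec_sub, Matrix.mulVec_sub,
      Matrix.mulVec_mulVec, Matrix.mulVec_mulVec]
  have P : ∀ i : Fin m,
      (A12 i).mulVec (y₂ i) + ∑ j, (A12' i j).mulVec (y₃ i j)
      = ((A12 i).mulVec (fun b => x (Sum.inr ⟨i, Sum.inl b⟩))
          + ∑ j, (A12' i j).mulVec (fun b => x (Sum.inr ⟨i, Sum.inr (j, b)⟩)))
        - (H12 A12 A12' A12'' A22' i * (H22 A22 A12'' A22' i)⁻¹).mulVec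
            ((fun b => a (Sum.inr ⟨i, Sum.inl b⟩))
              - ∑ j, (A12'' i j * (A22' i j)⁻¹).mulVec
                  (fun b => a (Sum.inr ⟨i, Sum.inr (j, b)⟩)))
        - ∑ j, (A12' i j * (A22' i j)⁻¹).mulVec
            (fun b => a (Sum.inr ⟨i, Sum.inr (j, b)⟩)) := by
    intro i
    have l1 : ∀ j, (A12' i j).mulVec (y₃ i j)
        = -((A12' i j * (A22' i j)⁻¹ * (A12' i j)ᵀ).mulVec (x ∘ Sum.inl))
          - (A12' i j * (A22' i j)⁻¹ * (A12'' i j)ᵀ).mulVec (y₂ i) := by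
      intro j
      simp only [hy₃]
      rw [Matrix.mulVec_neg, Matrix.mulVec_mulVec, Matrix.mulVec_add, Matrix.mulVec_mulVec,
        Matrix.mulVec_mulVec]
      abel
    have l3 : (H12 A12 A12' A12'' A22' i).mulVec (y₂ i)
        = -((H12 A12 A12' A12'' A22' i * (H22 A22 A12'' A22' i)⁻¹).mulVec
            ((H12 A12 A12' A12'' A22' i)ᵀ.mulVec (x ∘ Sum.inl))) := by
      simp only [hy₂]
      rw [Matrix.mulVec_neg, Matrix.mulVec_mulVec]
    have r2 : (H12 A12 A12' A12'' A22' i).mulVec (fun b => x (Sum.inr ⟨i, Sum.inl b⟩))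
        = (H12 A12 A12' A12'' A22' i * (H22 A22 A12'' A22' i)⁻¹).mulVec
            ((fun b => a (Sum.inr ⟨i, Sum.inl b⟩))
              - ∑ j, (A12'' i j * (A22' i j)⁻¹).mulVec
                  (fun b => a (Sum.inr ⟨i, Sum.inr (j, b)⟩)))
          - (H12 A12 A12' A12'' A22' i * (H22 A22 A12'' A22' i)⁻¹).mulVec
              ((H12 A12 A12' A12'' A22' i)ᵀ.mulVec (x ∘ Sum.inl)) := by
      rw [claim2 i, Matrix.mulVec_mulVec, Matrix.mulVec_sub]
    have hH12mv : ∀ v : Fin q₁ → ℝ, (H12 A12 A12' A12'' A22' i).mulVec v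
        = (A12 i).mulVec v
          - ∑ j, (A12' i j * (A22' i j)⁻¹ * (A12'' i j)ᵀ).mulVec v := by
      intro v; rw [H12, Matrix.sub_mulVec, sum_mulVec_aux]
    simp_rw [l1, key2' i]
    rw [Finset.sum_sub_distrib, Finset.sum_sub_distrib, Finset.sum_sub_distrib]
    simp only [Finset.sum_neg_distrib]
    linear_combination (hH12mv (fun b => x (Sum.inr ⟨i, Sum.inl b⟩))) + l3 - r2
      - (hH12mv (y₂ i))
  have V : A11.mulVec (x ∘ Sum.inl)
      + ∑ i, ((A12 i).mulVec (y₂ i) + ∑ j, (A12' i j).mulVec (y₃ i j))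
      = ((a ∘ Sum.inl)
        - ∑ i, (H12 A12 A12' A12'' A22' i * (H22 A22 A12'' A22' i)⁻¹).mulVec
            ((fun b => a (Sum.inr ⟨i, Sum.inl b⟩))
              - ∑ j, (A12'' i j * (A22' i j)⁻¹).mulVec
                  (fun b => a (Sum.inr ⟨i, Sum.inr (j, b)⟩)))
        - ∑ i, ∑ j, (A12' i j * (A22' i j)⁻¹).mulVec
            (fun b => a (Sum.inr ⟨i, Sum.inr (j, b)⟩))) := by
    rw [← eq1]
    simp_rw [P]
    rw [Finset.sum_sub_distrib, Finset.sum_sub_distrib]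
    abel
  have hTy : (threeLevelSparse A11 A12 A12' A22 A12'' A22').mulVec
      (glueVec (x ∘ Sum.inl) y₂ y₃)
      = glueVec ((a ∘ Sum.inl)
          - ∑ i, (H12 A12 A12' A12'' A22' i * (H22 A22 A12'' A22' i)⁻¹).mulVec
              ((fun b => a (Sum.inr ⟨i, Sum.inl b⟩))
                - ∑ j, (A12'' i j * (A22' i j)⁻¹).mulVec
                    (fun b => a (Sum.inr ⟨i, Sum.inr (j, b)⟩)))
          - ∑ i, ∑ j, (A12' i j * (A22' i j)⁻¹).mulVec
              (fun b => a (Sum.inr ⟨i, Sum.inr (j, b)⟩)))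
          (fun _ _ => 0) (fun _ _ _ => 0) := by
    funext k
    match k with
    | Sum.inl c =>
      rw [row1]
      have hc := congrFun V c
      simp only [Pi.add_apply, Pi.sub_apply, Finset.sum_apply] at hc
      simp [Finset.sum_apply] at hc ⊢
      exact hc
    | Sum.inr ⟨i, Sum.inl c⟩ =>
      rw [row2]
      have hc := congrFun (Z2 i) c
      simp only [Pi.add_apply, Pi.zero_apply, Finset.sum_apply] at hc
      simp [Finset.sum_apply] at hc ⊢
      exact hc
    | Sum.inr ⟨i, Sum.inr (j, c)⟩ =>
      rw [row3]
      have hc := congrFun (Z3 i j) c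
      simp only [Pi.add_apply, Pi.zero_apply] at hc
      simp at hc ⊢
      exact hc
  have hyinv : glueVec (x ∘ Sum.inl) y₂ y₃
      = (threeLevelSparse A11 A12 A12' A22 A12'' A22')⁻¹.mulVec
          (glueVec ((a ∘ Sum.inl)
            - ∑ i, (H12 A12 A12' A12'' A22' i * (H22 A22 A12'' A22' i)⁻¹).mulVec
                ((fun b => a (Sum.inr ⟨i, Sum.inl b⟩))
                  - ∑ j, (A12'' i j * (A22' i j)⁻¹).mulVec
                      (fun b => a (Sum.inr ⟨i, Sum.inr (j, b)⟩)))
            - ∑ i, ∑ j, (A12' i j * (A22' i j)⁻¹).mulVec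
                (fun b => a (Sum.inr ⟨i, Sum.inr (j, b)⟩)))
            (fun _ _ => 0) (fun _ _ _ => 0)) := by
    rw [← hTy, Matrix.mulVec_mulVec, Matrix.nonsing_inv_mul _ hA, Matrix.one_mulVec]
  refine ⟨?_, claim2, claim3⟩
  funext c
  have hc := congrFun hyinv (Sum.inl c)
  rw [glueVec_inl] at hc
  rw [show (x ∘ Sum.inl) c = x (Sum.inl c) from rfl] at hc ⊢
  rw [hc, mulVec_glue_zero]
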